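/- For every odd n ≥ 1 there is a polynomial F (the Faulhaber polynomial) such that for all integers m ≥ 0, the power sum S_n(m) = Σ_{ν=0}^{m-1} ν^n equals F(m(m-1)/2). -/

import Mathlib

open Polynomial

lemma coeff_comp_neg_X (p : ℚ[X]) (k : ℕ) :
    (p.comp (-X)).coeff k = (-1)^k * p.coeff k := by
  induction p using Polynomial.induction_on' with
  | add p q hp hq => simp [add_comp, hp, hq, mul_add]
  | monomial n a =>
      have h1 : ((-1 : ℚ[X]))^n = C ((-1)^n) := by simp
      rw [monomial_comp, neg_pow, h1]
      simp only [coeff_monomial, coeff_C_mul, coeff_X_pow, mul_ite, mul_zero, mul_one]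
      rcases eq_or_ne n k with h | h
      · subst h; simp; ring
      · simp [h, Ne.symm h]

lemma sum_range_two_mul (N : ℕ) (f : ℕ → ℚ) :
    ∑ j ∈ Finset.range (2 * N), f j = ∑ k ∈ Finset.range N, (f (2 * k) + f (2 * k + 1)) := by
  induction N with
  | zero => simp
  | succ N ih =>
      rw [Finset.sum_range_succ, ← ih, Nat.mul_succ]
      rw [Finset.sum_range_succ, Finset.sum_range_succ]
      ring_nf

lemma even_poly (R : ℚ[X]) (hR : R.comp (-X) = R) :
    ∃ G : ℚ[X], ∀ y : ℚ, R.eval y = G.eval (y^2) := by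
  have hodd : ∀ k, R.coeff (2*k+1) = 0 := by
    intro k
    have h := congrArg (fun p => p.coeff (2*k+1)) hR
    simp only [coeff_comp_neg_X] at h
    have hpow : ((-1:ℚ))^(2*k+1) = -1 := by
      rw [pow_succ, pow_mul]; norm_num
    rw [hpow] at h
    linarith
  refine ⟨∑ k ∈ Finset.range (R.natDegree + 1), C (R.coeff (2*k)) * X^k, fun y => ?_⟩
  rw [eval_eq_sum_range' (n := 2*(R.natDegree+1)) (by omega) y, sum_range_two_mul]
  rw [eval_finset_sum]
  simp [hodd, pow_mul]

lemma symm_poly (P : ℚ[X]) (hP : P.comp (C 1 - X) = P) :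
    ∃ F : ℚ[X], ∀ x : ℚ, P.eval x = F.eval (x*(x-1)/2) := by
  set R := P.comp (X + C (1/2)) with hRdef
  have hR : R.comp (-X) = R := by
    rw [hRdef, comp_assoc]
    conv_rhs => rw [← hP, comp_assoc]
    congr 1
    simp only [sub_comp, add_comp, X_comp, C_comp, neg_comp, one_comp]
    rw [show (C (1:ℚ)) = C (1/2) + C (1/2) by rw [← C_add]; norm_num]
    ring
  obtain ⟨G, hG⟩ := even_poly R hR
  refine ⟨G.comp (C 2 * X + C (1/4)), fun x => ?_⟩
  have h1 : P.eval x = R.eval (x - 1/2) := by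
    rw [hRdef, eval_comp]; norm_num
  rw [h1, hG, eval_comp]
  congr 1
  simp
  ring

/-- Faulhaber's theorem: for odd `n` the power sum `S_n(m)` is a polynomial in
`m(m-1)/2`. -/
theorem faulhaber_power_sum (n : ℕ) (hn : Odd n) :
    ∃ F : Polynomial ℚ, ∀ m : ℕ,
      ∑ ν ∈ Finset.range m, (ν : ℚ) ^ n = F.eval ((m : ℚ) * ((m : ℚ) - 1) / 2) := by
  have hn1 : ((n : ℚ) + 1) ≠ 0 := by positivity
  set P : ℚ[X] := C (((n:ℚ)+1)⁻¹) * (Polynomial.bernoulli (n+1) - C (_root_.bernoulli (n+1)))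
    with hPdef
  have hPeval : ∀ m : ℕ, P.eval (m:ℚ) = ∑ ν ∈ Finset.range m, (ν : ℚ) ^ n := by
    intro m
    rw [hPdef]
    simp only [eval_mul, eval_C, eval_sub]
    rw [Polynomial.bernoulli_succ_eval m n]
    field_simp
    ring
  have hstep : ∀ x : ℚ, P.eval (1 + x) = P.eval x + x ^ n := by
    intro x
    rw [hPdef]
    simp only [eval_mul, eval_C, eval_sub]
    rw [Polynomial.bernoulli_eval_one_add (n+1) x]
    have : (n + 1 - 1) = n := by omega
    rw [this]
    push_cast
    field_simp
    ring
  -- symmetry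
  have hsymm : P.comp (C 1 - X) = P := by
    set D : ℚ[X] := P.comp (C 1 - X) - P with hDdef
    have hD : ∀ x : ℚ, D.eval (x + 1) = D.eval x := by
      intro x
      rw [hDdef]
      simp only [eval_sub, eval_comp, eval_C, eval_X]
      have e1 : P.eval (x + 1) = P.eval x + x ^ n := by rw [add_comm]; exact hstep x
      have e2 : P.eval (1 - x) = P.eval (-x) - x ^ n := by
        have h := hstep (-x)
        rw [hn.neg_pow] at h
        rw [show (1 : ℚ) - x = 1 + (-x) by ring, h]
        ring
      rw [show (1:ℚ) - (x+1) = -x by ring, e1, e2]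
      ring
    have hD0 : D.eval 0 = 0 := by
      have h0 : P.eval 0 = 0 := by simpa using hPeval 0
      have h1 : P.eval 1 = 0 := by simpa [zero_pow hn.pos.ne'] using hPeval 1
      rw [hDdef]
      simp only [eval_sub, eval_comp, eval_C, eval_X, sub_zero, h0, h1]
    have hDn : ∀ m : ℕ, D.eval (m:ℚ) = 0 := by
      intro m
      induction m with
      | zero => simpa using hD0
      | succ m ih => rw [Nat.cast_succ, hD, ih]
    have : D = 0 := by
      apply eq_of_infinite_eval_eq
      apply Set.infinite_of_injective_forall_mem (f := (Nat.cast : ℕ → ℚ))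
        Nat.cast_injective
      intro m
      simp [hDn m]
    rwa [hDdef, sub_eq_zero] at this
  obtain ⟨F, hF⟩ := symm_poly P hsymm
  exact ⟨F, fun m => by rw [← hPeval, hF]⟩
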